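/- arXiv:2211.01715 — 3 statements merged into one kernel-verified Lean document; each statement's English description precedes it below -/
import Mathlib

section
/- Let n ≥ 2 be an integer and let R > 0 and M be real numbers with M > 4(n! − 1)R. For i = 1,…,n−1 let v_i ∈ ℝ^n be a vector with ‖v_i − l_i(M)‖_∞ < R (in the paper v_i = Log(g_i) for totally positive units g_i chosen with their logarithms in these balls). Let S be the n×n real matrix whose first n−1 rows are v₁,…,v_{n−1} and whose last row is the all-ones vector (1,…,1). Then (−1)^{n−1}·det(S) > 0, i.e. sign(det S) = (−1)^{n−1}. -/
open Finset

lemma det_pos_of_sum_col_lt_diag' {n : ℕ} (A : Matrix (Fin n) (Fin n) ℝ)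
    (hdom : ∀ k, ∑ i ∈ Finset.univ.erase k, |A i k| < A k k) :
    0 < A.det := by
  have hdiag : ∀ k, 0 < A k k := fun k =>
    lt_of_le_of_lt (Finset.sum_nonneg fun i _ => abs_nonneg _) (hdom k)
  set f : ℝ → ℝ :=
    fun t => (Matrix.of fun i j => if i = j then A i j else t * A i j).det with hf
  have hcont : Continuous f := by
    apply Continuous.matrix_det
    apply continuous_matrix
    intro i j
    by_cases h : i = j <;> simp [h] <;> fun_prop
  have hne : ∀ t ∈ Set.Icc (0:ℝ) 1, f t ≠ 0 := by
    intro t ht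
    apply det_ne_zero_of_sum_col_lt_diag
    intro k
    have h1 : ∑ i ∈ Finset.univ.erase k,
        ‖(Matrix.of fun i j => if i = j then A i j else t * A i j) i k‖
        ≤ ∑ i ∈ Finset.univ.erase k, |A i k| := by
      apply Finset.sum_le_sum
      intro i hi
      have hik : i ≠ k := (Finset.mem_erase.mp hi).1
      simp only [Matrix.of_apply, if_neg hik, Real.norm_eq_abs, abs_mul]
      calc |t| * |A i k| ≤ 1 * |A i k| := by
            apply mul_le_mul_of_nonneg_right _ (abs_nonneg _)
            rw [abs_le]; exact ⟨by linarith [ht.1], ht.2⟩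
        _ = |A i k| := one_mul _
    have h2 : ‖(Matrix.of fun i j => if i = j then A i j else t * A i j) k k‖ = A k k := by
      simp only [Matrix.of_apply, if_pos rfl, Real.norm_eq_abs]
      simp [abs_of_pos (hdiag k)]
    rw [h2]
    exact lt_of_le_of_lt h1 (hdom k)
  have hf0 : 0 < f 0 := by
    have he : (Matrix.of fun i j => if i = j then A i j else (0:ℝ) * A i j)
        = Matrix.diagonal (fun i => A i i) := by
      ext i j
      by_cases h : i = j <;> simp [h, Matrix.diagonal]
    simp only [hf, he, Matrix.det_diagonal]
    exact Finset.prod_pos fun i _ => hdiag i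
  have hf1 : f 1 = A.det := by
    have he : (Matrix.of fun i j => if i = j then A i j else (1:ℝ) * A i j) = A := by
      ext i j; by_cases h : i = j <;> simp [h]
    simp only [hf, he]
  by_contra hle
  push_neg at hle
  have hAne : A.det ≠ 0 := by rw [← hf1]; exact hne 1 (by norm_num)
  have hAlt : f 1 < 0 := by rw [hf1]; exact lt_of_le_of_ne hle hAne
  have := intermediate_value_Icc' (by norm_num : (0:ℝ) ≤ 1) hcont.continuousOn
  obtain ⟨t, ht, hft⟩ := this ⟨le_of_lt hAlt, le_of_lt hf0⟩
  exact hne t ht hft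

/-- The vector `l_i(M) ∈ ℝ^n` whose `(i+1)`-st coordinate (0-based coordinate `i`)
is `M` and whose other coordinates all equal `−M/(n−1)`. -/
noncomputable def lvec (n : ℕ) (M : ℝ) (i : ℕ) : Fin n → ℝ :=
  fun j => if (j : ℕ) = i then M else -M / ((n : ℝ) - 1)

/-- Let `n ≥ 2`, `R > 0` and `M > 4(n!−1)R`.  If `v₁,…,v_{n−1} ∈ ℝ^n` satisfy
`‖vᵢ − l_i(M)‖_∞ < R`, and `S` is the `n × n` matrix whose first `n−1` rows are
`v₁,…,v_{n−1}` and whose last row is `(1,…,1)`, then `(−1)^{n−1}·det S > 0`. -/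
theorem statement1 (n : ℕ) (hn : 2 ≤ n) (R M : ℝ) (hR : 0 < R)
    (hM : 4 * ((n.factorial : ℝ) - 1) * R < M)
    (v : Fin (n - 1) → Fin n → ℝ)
    (hv : ∀ t : Fin (n - 1), ‖v t - lvec n M ((t : ℕ) + 1)‖ < R) :
    0 < (-1 : ℝ) ^ (n - 1) *
      (Matrix.of fun i j : Fin n =>
        if h : (i : ℕ) < n - 1 then v ⟨(i : ℕ), h⟩ j else 1).det := by
  obtain ⟨m, rfl⟩ : ∃ m, n = m + 2 := ⟨n - 2, by omega⟩
  show 0 < (-1 : ℝ) ^ (m + 1) *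
      (Matrix.of fun i j : Fin (m + 2) =>
        if h : (i : ℕ) < m + 1 then v ⟨(i : ℕ), h⟩ j else 1).det
  set S : Matrix (Fin (m+2)) (Fin (m+2)) ℝ :=
    Matrix.of fun i j : Fin (m + 2) =>
      if h : (i : ℕ) < m + 1 then v ⟨(i : ℕ), h⟩ j else 1 with hSdef
  -- numeric facts
  have hfac : ((m:ℝ)+1)^2 + 1 ≤ (m+2).factorial := by
    have h1 : (m+1)^2 + 1 ≤ (m+2).factorial := by
      have h2 : (m+1) ≤ (m+1).factorial := Nat.self_le_factorial _
      have h3 : (m+2).factorial = (m+2) * (m+1).factorial := rfl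
      nlinarith
    exact_mod_cast h1
  have hMR : 2*((m:ℝ)+1)^2 * R < M := by nlinarith
  have hM0 : (0:ℝ) < M := by nlinarith
  set K : ℝ := M / (2 * ((m:ℝ)+1)) with hKdef
  have hK0 : 0 < K := by positivity
  -- coordinatewise bounds
  have hvb : ∀ (t : Fin (m+1)) (j : Fin (m+2)),
      |v t j - lvec (m+2) M ((t:ℕ)+1) j| < R := by
    intro t j
    have h1 := norm_le_pi_norm (v t - lvec (m+2) M ((t:ℕ)+1)) j
    rw [Pi.sub_apply, Real.norm_eq_abs] at h1
    exact lt_of_le_of_lt h1 (hv t)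
  have hdiagb : ∀ t : Fin (m+1), M - R < v t ⟨(t:ℕ)+1, by omega⟩ := by
    intro t
    have h1 := hvb t ⟨(t:ℕ)+1, by omega⟩
    rw [lvec, if_pos rfl] at h1
    have := abs_lt.mp h1
    linarith [this.1]
  have hoffb : ∀ (t : Fin (m+1)) (j : Fin (m+2)), (j:ℕ) ≠ (t:ℕ)+1 →
      |v t j| < M/((m:ℝ)+1) + R := by
    intro t j hj
    have h1 := hvb t j
    rw [lvec] at h1
    simp only [if_neg hj] at h1
    have h2 : (((m+2:ℕ)):ℝ) - 1 = (m:ℝ) + 1 := by push_cast; ring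
    rw [h2] at h1
    have h3 := abs_lt.mp h1
    rw [abs_lt]
    have h4 : 0 < (m:ℝ)+1 := by positivity
    have h5 : 0 < M/((m:ℝ)+1) := by positivity
    constructor
    · have : -M/((m:ℝ)+1) = -(M/((m:ℝ)+1)) := by ring
      rw [this] at h3
      linarith [h3.1]
    · have : -M/((m:ℝ)+1) = -(M/((m:ℝ)+1)) := by ring
      rw [this] at h3
      linarith [h3.2]
  have hsumlvec : ∀ t : Fin (m+1), ∑ c, lvec (m+2) M ((t:ℕ)+1) c = 0 := by
    intro t
    have h2 : (((m+2:ℕ)):ℝ) - 1 = (m:ℝ) + 1 := by push_cast; ring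
    have h4 : ((m:ℝ)+1) ≠ 0 := by positivity
    have key : ∀ c : Fin (m+2), lvec (m+2) M ((t:ℕ)+1) c
        = (-(M/((m:ℝ)+1))) + (if c = (⟨(t:ℕ)+1, by omega⟩ : Fin (m+2)) then M + M/((m:ℝ)+1) else 0) := by
      intro c
      rw [lvec, h2]
      by_cases h : (c:ℕ) = (t:ℕ)+1
      · rw [if_pos h, if_pos (Fin.ext h)]
        ring
      · rw [if_neg h, if_neg (fun hc => h (by rw [hc]))]
        ring
    simp only [key]
    rw [Finset.sum_add_distrib, Finset.sum_const, Finset.sum_ite_eq']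
    simp only [Finset.mem_univ, if_pos, Finset.card_univ, Fintype.card_fin]
    push_cast
    have h5 : M / ((m:ℝ)+1) * ((m:ℝ)+1) = M := div_mul_cancel₀ _ h4
    linear_combination (-1:ℝ) * h5
  have hsumb : ∀ t : Fin (m+1), |∑ c, v t c| ≤ ((m:ℝ)+2)*R := by
    intro t
    have h1 : ∑ c, v t c = ∑ c, (v t c - lvec (m+2) M ((t:ℕ)+1) c) := by
      rw [Finset.sum_sub_distrib, hsumlvec, sub_zero]
    rw [h1]
    calc |∑ c, (v t c - lvec (m+2) M ((t:ℕ)+1) c)|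
        ≤ ∑ c, |v t c - lvec (m+2) M ((t:ℕ)+1) c| := Finset.abs_sum_le_sum_abs _ _
      _ ≤ ∑ _c : Fin (m+2), R := Finset.sum_le_sum (fun c _ => le_of_lt (hvb t c))
      _ = ((m:ℝ)+2)*R := by rw [Finset.sum_const, Finset.card_univ, Fintype.card_fin]; push_cast; ring
  -- the matrices
  set lastI : Fin (m+2) := Fin.last (m+1) with hlastI
  set S1 : Matrix (Fin (m+2)) (Fin (m+2)) ℝ := S.updateRow lastI (K • S lastI) with hS1def
  set S2 : Matrix (Fin (m+2)) (Fin (m+2)) ℝ := S1.updateCol 0 (fun k => ∑ i, S1 k i) with hS2def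
  set T : Matrix (Fin (m+2)) (Fin (m+2)) ℝ := S2.submatrix id (finRotate (m+2)) with hTdef
  have hdet1 : S1.det = K * S.det := by
    rw [hS1def, Matrix.det_updateRow_smul, Matrix.updateRow_eq_self]
  have hdet2 : S2.det = S1.det := by
    have h := Matrix.det_updateCol_sum S1 0 (fun _ => (1:ℝ))
    simpa using h
  have hdetT : T.det = (-1 : ℝ)^(m+1) * S2.det := by
    rw [hTdef, Matrix.det_permute', sign_finRotate]
    push_cast
    ring
  -- entries of S1
  have hS1_last : ∀ c, S1 lastI c = K := by
    intro c
    rw [hS1def, Matrix.updateRow_self]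
    have : S lastI c = 1 := by
      rw [hSdef]
      simp [hlastI, Fin.last]
    simp [this]
  have hS1_v : ∀ (i : Fin (m+2)) (h : (i:ℕ) < m+1) (c : Fin (m+2)),
      S1 i c = v ⟨(i:ℕ), h⟩ c := by
    intro i h c
    have hne : i ≠ lastI := by
      intro he
      rw [he, hlastI] at h
      simp [Fin.last] at h
    rw [hS1def, Matrix.updateRow_ne hne, hSdef]
    simp [h, show (i:ℕ) ≤ m by omega]
  -- key inequalities
  have hP : (0:ℝ) < (m:ℝ)+1 := by positivity
  have hKR : ((m:ℝ)+1)*R < K := by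
    rw [hKdef, lt_div_iff₀ (by positivity)]
    nlinarith
  have hMP : M/((m:ℝ)+1) = 2*K := by
    rw [hKdef]
    field_simp
  have hMK : M = 2*((m:ℝ)+1)*K := by
    rw [hKdef]
    field_simp
  -- diagonal dominance of T
  have hdom : ∀ k, ∑ i ∈ Finset.univ.erase k, |T i k| < T k k := by
    intro k
    by_cases hk : (k:ℕ) < m+1
    · -- column k comes from column k+1 of S2
      set k1 : Fin (m+2) := ⟨(k:ℕ)+1, by omega⟩ with hk1def
      have hklt : k < Fin.last (m+1) := by
        rw [Fin.lt_def]
        simpa [Fin.last] using hk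
      have hrot : finRotate (m+2) k = k1 := by
        rw [finRotate_succ_apply]
        apply Fin.ext
        rw [Fin.val_add_one_of_lt hklt]
      have hk10 : k1 ≠ 0 := by
        intro h
        have := congrArg Fin.val h
        simp [hk1def] at this
      have hTik : ∀ i, T i k = S1 i k1 := by
        intro i
        rw [hTdef]
        simp only [Matrix.submatrix_apply, id_eq, hrot]
        rw [hS2def, Matrix.updateCol_ne hk10]
      have hdiagT : M - R < T k k := by
        rw [hTik, hS1_v k hk]
        exact hdiagb ⟨(k:ℕ), hk⟩
      set g : Fin (m+2) → ℝ := fun i => if i = lastI then K else M/((m:ℝ)+1) + R with hgdef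
      have hb : ∀ i ∈ Finset.univ.erase k, |T i k| ≤ g i := by
        intro i hi
        have hik : i ≠ k := (Finset.mem_erase.mp hi).1
        by_cases hi' : (i:ℕ) < m+1
        · have hil : i ≠ lastI := by
            intro he
            rw [he, hlastI] at hi'
            simp [Fin.last] at hi'
          rw [hTik, hS1_v i hi']
          have hne : (k1:ℕ) ≠ (i:ℕ)+1 := by
            simp only [hk1def]
            intro h
            exact hik (Fin.ext (by omega))
          rw [hgdef]
          simp only [if_neg hil]
          exact le_of_lt (hoffb ⟨(i:ℕ), hi'⟩ k1 hne)
        · have hil : i = lastI := by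
            apply Fin.ext
            have := i.isLt
            simp only [hlastI, Fin.val_last]
            omega
          rw [hTik, hil, hS1_last, hgdef]
          simp [abs_of_pos hK0]
      have hgk : g k = M/((m:ℝ)+1)+R := by
        rw [hgdef]
        have hkl' : k ≠ lastI := by
          intro he
          rw [he, hlastI] at hk
          simp [Fin.last] at hk
        simp [hkl']
      have hgU : ∑ i, g i = ((m:ℝ)+2)*(M/((m:ℝ)+1)+R) + (K - (M/((m:ℝ)+1)+R)) := by
        have h1 : ∀ i, g i = (M/((m:ℝ)+1)+R) + (if i = lastI then K - (M/((m:ℝ)+1)+R) else 0) := by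
          intro i
          by_cases h : i = lastI <;> simp [hgdef, h]
        rw [Finset.sum_congr rfl (fun i _ => h1 i)]
        rw [Finset.sum_add_distrib, Finset.sum_const, Finset.sum_ite_eq' Finset.univ lastI]
        simp only [Finset.mem_univ, if_pos, Finset.card_univ, Fintype.card_fin, nsmul_eq_mul]
        push_cast
        ring
      have hgsum : ∑ i ∈ Finset.univ.erase k, g i = (m:ℝ)*(M/((m:ℝ)+1)+R) + K := by
        rw [Finset.sum_erase_eq_sub (Finset.mem_univ k), hgU, hgk]
        ring
      have harith : (m:ℝ)*(M/((m:ℝ)+1)+R) + K < M - R := by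
        rw [hMP]
        nlinarith [hKR, hMK]
      calc ∑ i ∈ Finset.univ.erase k, |T i k| ≤ ∑ i ∈ Finset.univ.erase k, g i :=
            Finset.sum_le_sum hb
        _ = (m:ℝ)*(M/((m:ℝ)+1)+R) + K := hgsum
        _ < M - R := harith
        _ < T k k := hdiagT
    · -- k is the last column, coming from the summed column 0
      have hkl : k = lastI := by
        apply Fin.ext
        have := k.isLt
        simp only [hlastI, Fin.val_last]
        omega
      have hrot : finRotate (m+2) k = 0 := by
        rw [hkl, hlastI, finRotate_succ_apply, Fin.last_add_one]
      have hTik : ∀ i, T i k = ∑ c, S1 i c := by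
        intro i
        rw [hTdef]
        simp only [Matrix.submatrix_apply, id_eq, hrot]
        rw [hS2def, Matrix.updateCol_self]
      have hdiagT : T k k = ((m:ℝ)+2)*K := by
        rw [hTik, hkl]
        have : ∀ c : Fin (m+2), S1 lastI c = K := hS1_last
        simp only [this]
        rw [Finset.sum_const, Finset.card_univ, Fintype.card_fin, nsmul_eq_mul]
        push_cast
        ring
      have hb : ∀ i ∈ Finset.univ.erase k, |T i k| ≤ ((m:ℝ)+2)*R := by
        intro i hi
        have hik : i ≠ k := (Finset.mem_erase.mp hi).1
        have hi' : (i:ℕ) < m+1 := by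
          have h1 := i.isLt
          rcases Nat.lt_or_ge (i:ℕ) (m+1) with h | h
          · exact h
          · exfalso
            apply hik
            rw [hkl]
            apply Fin.ext
            simp only [hlastI, Fin.val_last]
            omega
        have h2 : ∀ c, S1 i c = v ⟨(i:ℕ), hi'⟩ c := hS1_v i hi'
        rw [hTik]
        simp only [h2]
        exact hsumb ⟨(i:ℕ), hi'⟩
      calc ∑ i ∈ Finset.univ.erase k, |T i k| ≤ ∑ _i ∈ Finset.univ.erase k, ((m:ℝ)+2)*R :=
            Finset.sum_le_sum hb
        _ = ((m:ℝ)+1)*(((m:ℝ)+2)*R) := by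
            rw [Finset.sum_const, Finset.card_erase_of_mem (Finset.mem_univ k),
              Finset.card_univ, Fintype.card_fin, nsmul_eq_mul]
            push_cast
            ring
        _ < ((m:ℝ)+2)*K := by nlinarith [hKR]
        _ = T k k := hdiagT.symm
  have hTpos : 0 < T.det := det_pos_of_sum_col_lt_diag' T hdom
  have h2 : 0 < K * ((-1:ℝ)^(m+1) * S.det) := by
    have he : T.det = K * ((-1:ℝ)^(m+1) * S.det) := by
      rw [hdetT, hdet2, hdet1]; ring
    rwa [he] at hTpos
  rcases mul_pos_iff.mp h2 with ⟨_, h⟩ | ⟨hneg, _⟩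
  · exact h
  · linarith
end

section
/- Let X₁ be a discrete topological space, X₂ a totally disconnected Hausdorff topological space, and A a locally profinite abelian group (i.e. a locally compact Hausdorff totally disconnected topological abelian group). Then the ℤ-linear map C_c(X₁, ℤ) ⊗_ℤ C_c^⋄(X₂, A) → C_c^⋄(X₁ × X₂, A) determined by sending f ⊗ g to the function (x₁, x₂) ↦ f(x₁)·g(x₂) (the f(x₁)-fold multiple of g(x₂) in A) is a well-defined isomorphism of abelian groups. -/
open scoped TensorProduct
set_option synthInstance.maxHeartbeats 1000000
set_option maxHeartbeats 1000000

/-- `C_c(X, B)`: the additive group of continuous compactly supported maps `X → B`. -/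
def CcSet (X : Type) [TopologicalSpace X] (B : Type) [TopologicalSpace B]
    [AddCommGroup B] [IsTopologicalAddGroup B] : AddSubgroup (X → B) where
  carrier := {f | Continuous f ∧ HasCompactSupport f}
  zero_mem' := by
    refine ⟨continuous_const, ?_⟩
    have h : tsupport (0 : X → B) = ∅ := by
      simp [tsupport, Function.support_zero]
    rw [HasCompactSupport, h]
    exact isCompact_empty
  add_mem' := fun hf hg => ⟨hf.1.add hg.1, hf.2.add hg.2⟩
  neg_mem' := fun hf => ⟨hf.1.neg, hf.2.neg⟩

/-- `C_c^⋄(X, A)`: the subgroup of `C_c(X, A)` generated by the locally constant maps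
with compact support together with the continuous compactly supported maps taking
values in a compact open subgroup `K` of `A`. -/
def CcDiamond (X : Type) [TopologicalSpace X] (A : Type) [TopologicalSpace A]
    [AddCommGroup A] [IsTopologicalAddGroup A] : AddSubgroup (X → A) :=
  AddSubgroup.closure
    ({f : X → A | IsLocallyConstant f ∧ HasCompactSupport f} ∪
      {f : X → A | Continuous f ∧ HasCompactSupport f ∧
        ∃ K : AddSubgroup A, IsCompact (K : Set A) ∧ IsOpen (K : Set A) ∧
          ∀ x, f x ∈ K})


section
variable {X₁ : Type} [TopologicalSpace X₁] [DiscreteTopology X₁]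
  {X₂ : Type} [TopologicalSpace X₂] [T2Space X₂]
  {A : Type} [AddCommGroup A] [TopologicalSpace A] [IsTopologicalAddGroup A]

/-- The generating set of `CcDiamond`. -/
def ccGens (X : Type) [TopologicalSpace X] (A : Type) [TopologicalSpace A]
    [AddCommGroup A] [IsTopologicalAddGroup A] : Set (X → A) :=
  {f : X → A | IsLocallyConstant f ∧ HasCompactSupport f} ∪
    {f : X → A | Continuous f ∧ HasCompactSupport f ∧
      ∃ K : AddSubgroup A, IsCompact (K : Set A) ∧ IsOpen (K : Set A) ∧
        ∀ x, f x ∈ K}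

theorem ccDiamond_eq (X : Type) [TopologicalSpace X] (A : Type) [TopologicalSpace A]
    [AddCommGroup A] [IsTopologicalAddGroup A] :
    CcDiamond X A = AddSubgroup.closure (ccGens X A) := rfl

theorem smul_mem_gens {f : X₁ → ℤ} (hf : HasCompactSupport f)
    {g : X₂ → A} (hg : g ∈ ccGens X₂ A) :
    (fun p : X₁ × X₂ => f p.1 • g p.2) ∈ ccGens (X₁ × X₂) A := by
  have hsupp : ∀ (hg2 : HasCompactSupport g),
      HasCompactSupport (fun p : X₁ × X₂ => f p.1 • g p.2) := by
    intro hg2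
    refine HasCompactSupport.intro (hf.prod hg2) ?_
    rintro ⟨x, y⟩ hxy
    rcases not_and_or.1 (by simpa [Set.mem_prod] using hxy) with h | h
    · simp [image_eq_zero_of_notMem_tsupport h]
    · simp [image_eq_zero_of_notMem_tsupport h]
  rcases hg with ⟨hlc, hcs⟩ | ⟨hc, hcs, K, hK1, hK2, hK3⟩
  · left
    refine ⟨?_, hsupp hcs⟩
    exact IsLocallyConstant.comp₂
      ((IsLocallyConstant.of_discrete f).comp_continuous continuous_fst)
      (hlc.comp_continuous continuous_snd) (· • ·)
  · right
    refine ⟨?_, hsupp hcs, K, hK1, hK2, fun p => K.zsmul_mem (hK3 p.2) _⟩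
    exact ((continuous_of_discreteTopology (f := f)).comp continuous_fst).smul
      (hc.comp continuous_snd)

theorem smul_mem_ccDiamond {f : X₁ → ℤ} (hf : HasCompactSupport f)
    {g : X₂ → A} (hg : g ∈ CcDiamond X₂ A) :
    (fun p : X₁ × X₂ => f p.1 • g p.2) ∈ CcDiamond (X₁ × X₂) A := by
  let φ : (X₂ → A) →+ (X₁ × X₂ → A) :=
    { toFun := fun g p => f p.1 • g p.2
      map_zero' := by funext p; simp
      map_add' := fun a b => by funext p; simp [smul_add] }
  have : CcDiamond X₂ A ≤ (CcDiamond (X₁ × X₂) A).comap φ := by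
    rw [ccDiamond_eq]
    refine AddSubgroup.closure_le _ |>.2 fun g hg => ?_
    exact AddSubgroup.subset_closure (smul_mem_gens hf hg)
  exact this hg

end
section
variable (X₁ : Type) [TopologicalSpace X₁] [DiscreteTopology X₁]
  (X₂ : Type) [TopologicalSpace X₂] [T2Space X₂]
  (A : Type) [AddCommGroup A] [TopologicalSpace A] [IsTopologicalAddGroup A]

noncomputable def ccBil :
    (CcSet X₁ ℤ) →ₗ[ℤ] (CcDiamond X₂ A) →ₗ[ℤ] (CcDiamond (X₁ × X₂) A) :=
  LinearMap.mk₂ ℤ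
    (fun f g => ⟨fun p => (f : X₁ → ℤ) p.1 • (g : X₂ → A) p.2,
      smul_mem_ccDiamond f.2.2 g.2⟩)
    (fun f f' g => Subtype.ext (funext fun p => by
      show ((f : X₁ → ℤ) p.1 + (f' : X₁ → ℤ) p.1) • _ = _
      rw [add_smul]; rfl))
    (fun n f g => Subtype.ext (funext fun p => by
      show ((n • f : CcSet X₁ ℤ) : X₁ → ℤ) p.1 • _ = _
      rw [show ((n • f : CcSet X₁ ℤ) : X₁ → ℤ) p.1 = n • (f : X₁ → ℤ) p.1 from rfl,
        smul_eq_mul, mul_smul]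
      rfl))
    (fun f g g' => Subtype.ext (funext fun p => by
      show _ • ((g : X₂ → A) p.2 + (g' : X₂ → A) p.2) = _
      rw [smul_add]; rfl))
    (fun n f g => Subtype.ext (funext fun p => by
      show (f : X₁ → ℤ) p.1 • ((n • g : CcDiamond X₂ A) : X₂ → A) p.2 = _
      rw [show ((n • g : CcDiamond X₂ A) : X₂ → A) p.2 = n • (g : X₂ → A) p.2 from rfl,
        smul_comm]
      rfl))

noncomputable def ccPhi :
    (CcSet X₁ ℤ) ⊗[ℤ] (CcDiamond X₂ A) →ₗ[ℤ] CcDiamond (X₁ × X₂) A :=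
  TensorProduct.lift (ccBil X₁ X₂ A)

theorem ccPhi_tmul (f : CcSet X₁ ℤ) (g : CcDiamond X₂ A) (p : X₁ × X₂) :
    ((ccPhi X₁ X₂ A (f ⊗ₜ[ℤ] g) : X₁ × X₂ → A) p) =
      (f : X₁ → ℤ) p.1 • (g : X₂ → A) p.2 := rfl

theorem ccSet_support_finite (f : CcSet X₁ ℤ) :
    (Function.support (f : X₁ → ℤ)).Finite :=
  f.2.2.finite_of_discrete.subset (subset_tsupport _)

theorem tsupport_eq_of_discrete {Y M : Type} [TopologicalSpace Y] [DiscreteTopology Y]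
    [Zero M] (f : Y → M) : tsupport f = Function.support f := by
  simp [tsupport, IsClosed.closure_eq (isClosed_discrete _)]

noncomputable def ccFinsupp : (CcSet X₁ ℤ) ≃ₗ[ℤ] (X₁ →₀ ℤ) where
  toFun f := Finsupp.ofSupportFinite (f : X₁ → ℤ) (ccSet_support_finite X₁ f)
  invFun l := ⟨(l : X₁ → ℤ), continuous_of_discreteTopology, by
    rw [HasCompactSupport, tsupport_eq_of_discrete]
    exact (Set.Finite.subset l.support.finite_toSet
      (by rw [Finsupp.fun_support_eq])).isCompact⟩
  map_add' f f' := by ext x; rfl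
  map_smul' n f := by ext x; rfl
  left_inv f := Subtype.ext rfl
  right_inv l := by ext x; rfl

theorem ccFinsupp_apply (f : CcSet X₁ ℤ) (x : X₁) :
    ccFinsupp X₁ f x = (f : X₁ → ℤ) x := rfl

noncomputable def ccEv : (X₁ →₀ (CcDiamond X₂ A)) →ₗ[ℤ] (X₁ × X₂ → A) where
  toFun l := fun p => ((l p.1 : X₂ → A) p.2)
  map_add' l l' := funext fun p => by simp
  map_smul' n l := funext fun p => by simp

noncomputable def ccEquiv :
    (CcSet X₁ ℤ) ⊗[ℤ] (CcDiamond X₂ A) ≃ₗ[ℤ] (X₁ →₀ (CcDiamond X₂ A)) :=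
  letI := Classical.decEq X₁
  (TensorProduct.congr (ccFinsupp X₁) (LinearEquiv.refl ℤ _)).trans
    (TensorProduct.finsuppScalarLeft ℤ (CcDiamond X₂ A) X₁)

theorem ccPhi_eq_ev (t : (CcSet X₁ ℤ) ⊗[ℤ] (CcDiamond X₂ A)) (p : X₁ × X₂) :
    ((ccPhi X₁ X₂ A t : X₁ × X₂ → A) p) = ((ccEquiv X₁ X₂ A t) p.1 : X₂ → A) p.2 := by
  induction t using TensorProduct.induction_on with
  | zero =>
      rw [map_zero, map_zero]
      simp
  | tmul f g =>
      rw [ccPhi_tmul]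
      unfold ccEquiv
      erw [LinearEquiv.trans_apply]
      simp only [ccEquiv, LinearEquiv.trans_apply, TensorProduct.congr_tmul,
        LinearEquiv.refl_apply, TensorProduct.finsuppScalarLeft_apply_tmul_apply]
      rw [ccFinsupp_apply]
      rfl
  | add t t' ih ih' =>
      rw [map_add, map_add]
      have : ((ccPhi X₁ X₂ A t + ccPhi X₁ X₂ A t' : CcDiamond (X₁ × X₂) A) : X₁ × X₂ → A) p
          = (ccPhi X₁ X₂ A t : X₁ × X₂ → A) p + (ccPhi X₁ X₂ A t' : X₁ × X₂ → A) p := rfl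
      rw [this, ih, ih']
      simp

theorem ccPhi_injective : Function.Injective (ccPhi X₁ X₂ A) := by
  rw [injective_iff_map_eq_zero]
  intro t ht
  have h0 : ccEquiv X₁ X₂ A t = 0 := by
    ext x y
    have := (ccPhi_eq_ev X₁ X₂ A t (x, y)).symm
    rw [ht] at this
    simpa using this
  have := congrArg (ccEquiv X₁ X₂ A).symm h0
  simpa using this

end
section
variable (X₁ : Type) [TopologicalSpace X₁] [DiscreteTopology X₁]
  (X₂ : Type) [TopologicalSpace X₂] [T2Space X₂]
  (A : Type) [AddCommGroup A] [TopologicalSpace A] [IsTopologicalAddGroup A]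

/-- The Kronecker delta as an element of `CcSet X₁ ℤ`. -/
noncomputable def ccDelta (x : X₁) : CcSet X₁ ℤ :=
  letI := Classical.decEq X₁
  ⟨fun y => if y = x then 1 else 0, continuous_of_discreteTopology, by
    rw [HasCompactSupport, tsupport_eq_of_discrete]
    exact ((Set.finite_singleton x).subset (fun y hy => by
      by_contra h
      simp only [Function.mem_support] at hy
      exact hy (if_neg (by simpa using h)))).isCompact⟩

theorem ccDelta_self (x : X₁) : ((ccDelta X₁ x : X₁ → ℤ) x) = 1 := by
  simp [ccDelta]

theorem ccDelta_ne {x y : X₁} (h : y ≠ x) : ((ccDelta X₁ x : X₁ → ℤ) y) = 0 := by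
  simp [ccDelta, h]

variable {X₁ X₂ A}

theorem slice_mem_gens {h : X₁ × X₂ → A} (hh : h ∈ ccGens (X₁ × X₂) A) (x : X₁) :
    (fun y => h (x, y)) ∈ ccGens X₂ A := by
  have hsupp : ∀ (hcs : HasCompactSupport h), HasCompactSupport fun y => h (x, y) := by
    intro hcs
    refine HasCompactSupport.intro (hcs.image continuous_snd) fun y hy => ?_
    by_contra hne
    exact hy ⟨(x, y), subset_tsupport _ hne, rfl⟩
  rcases hh with ⟨hlc, hcs⟩ | ⟨hc, hcs, K, hK1, hK2, hK3⟩
  · exact Or.inl ⟨hlc.comp_continuous (Continuous.prodMk_right x), hsupp hcs⟩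
  · exact Or.inr ⟨hc.comp (Continuous.prodMk_right x), hsupp hcs, K, hK1, hK2,
      fun y => hK3 (x, y)⟩

theorem gens_fst_tsupport_finite {h : X₁ × X₂ → A} (hcs : HasCompactSupport h) :
    (Prod.fst '' tsupport h).Finite :=
  (hcs.image continuous_fst).finite_of_discrete

theorem gens_mem_range {h : X₁ × X₂ → A} (hh : h ∈ ccGens (X₁ × X₂) A) :
    ∃ t, ((ccPhi X₁ X₂ A t : CcDiamond (X₁ × X₂) A) : X₁ × X₂ → A) = h := by
  classical
  have hcs : HasCompactSupport h := by
    rcases hh with ⟨_, hcs⟩ | ⟨_, hcs, _⟩ <;> exact hcs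
  refine ⟨∑ x ∈ (gens_fst_tsupport_finite hcs).toFinset,
    (ccDelta X₁ x) ⊗ₜ[ℤ]
      (⟨fun y => h (x, y), AddSubgroup.subset_closure (slice_mem_gens hh x)⟩ :
        CcDiamond X₂ A), ?_⟩
  funext p
  rw [map_sum]
  rw [show (((∑ x ∈ (gens_fst_tsupport_finite hcs).toFinset,
      ccPhi X₁ X₂ A ((ccDelta X₁ x) ⊗ₜ[ℤ]
        (⟨fun y => h (x, y), AddSubgroup.subset_closure (slice_mem_gens hh x)⟩ :
          CcDiamond X₂ A)) : CcDiamond (X₁ × X₂) A) : X₁ × X₂ → A) p)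
    = ∑ x ∈ (gens_fst_tsupport_finite hcs).toFinset,
        ((ccPhi X₁ X₂ A ((ccDelta X₁ x) ⊗ₜ[ℤ]
          (⟨fun y => h (x, y), AddSubgroup.subset_closure (slice_mem_gens hh x)⟩ :
            CcDiamond X₂ A)) : X₁ × X₂ → A) p)
    from by rw [AddSubmonoidClass.coe_finset_sum]; exact Finset.sum_apply p _ _]
  simp only [ccPhi_tmul]
  by_cases hp : p.1 ∈ (gens_fst_tsupport_finite hcs).toFinset
  · rw [Finset.sum_eq_single_of_mem p.1 hp
      (fun b _ hb => by rw [ccDelta_ne X₁ hb.symm, zero_smul])]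
    rw [ccDelta_self, one_smul]
  · have h0 : h p = 0 := by
      by_contra hne
      exact hp ((gens_fst_tsupport_finite hcs).mem_toFinset.2
        ⟨p, subset_tsupport _ hne, rfl⟩)
    rw [h0, Finset.sum_eq_zero]
    intro x hx
    rw [ccDelta_ne X₁ (fun e : p.1 = x => hp (by rw [e]; exact hx)), zero_smul]

theorem ccPhi_surjective : Function.Surjective (ccPhi X₁ X₂ A) := by
  intro c
  let T : AddSubgroup (X₁ × X₂ → A) :=
    { carrier := {h | ∃ t,
        ((ccPhi X₁ X₂ A t : CcDiamond (X₁ × X₂) A) : X₁ × X₂ → A) = h}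
      zero_mem' := ⟨0, by rw [map_zero]; rfl⟩
      add_mem' := by
        rintro a b ⟨t, ht⟩ ⟨t', ht'⟩
        exact ⟨t + t', by rw [map_add, AddSubgroup.coe_add, ht, ht']⟩
      neg_mem' := by
        rintro a ⟨t, ht⟩
        exact ⟨-t, by rw [map_neg, AddSubgroup.coe_neg, ht]⟩ }
  have hle : CcDiamond (X₁ × X₂) A ≤ T := by
    rw [ccDiamond_eq]
    exact (AddSubgroup.closure_le _).2 fun g hg => gens_mem_range hg
  obtain ⟨t, ht⟩ := hle c.2
  exact ⟨t, Subtype.ext ht⟩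

end

/-- for `X₁` discrete, `X₂` totally disconnected Hausdorff, and `A` a
locally profinite abelian group, the `ℤ`-linear map
`C_c(X₁, ℤ) ⊗_ℤ C_c^⋄(X₂, A) → C_c^⋄(X₁ × X₂, A)` determined by
`f ⊗ g ↦ ((x₁, x₂) ↦ f(x₁) • g(x₂))` is a well-defined isomorphism of abelian
groups. -/
theorem statement7
    (X₁ : Type) [TopologicalSpace X₁] [DiscreteTopology X₁]
    (X₂ : Type) [TopologicalSpace X₂] [T2Space X₂] [TotallyDisconnectedSpace X₂]
    (A : Type) [AddCommGroup A] [TopologicalSpace A] [IsTopologicalAddGroup A]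
    [LocallyCompactSpace A] [T2Space A] [TotallyDisconnectedSpace A] :
    ∃ Φ : (CcSet X₁ ℤ) ⊗[ℤ] (CcDiamond X₂ A) →ₗ[ℤ] CcDiamond (X₁ × X₂) A,
      (∀ (f : CcSet X₁ ℤ) (g : CcDiamond X₂ A) (x : X₁ × X₂),
        ((Φ (f ⊗ₜ[ℤ] g) : X₁ × X₂ → A) x) = (f : X₁ → ℤ) x.1 • (g : X₂ → A) x.2) ∧
      Function.Bijective Φ :=
  ⟨ccPhi X₁ X₂ A, fun f g x => ccPhi_tmul X₁ X₂ A f g x,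
    ccPhi_injective X₁ X₂ A, ccPhi_surjective⟩
end

section
/- For every integer n ≥ 2, one has (n/(n−1) − 1/(2(n! − 1)))^{n−1} − (1/2)·(n/(n−1) + 1/(2(n! − 1)))^{n−2} > 0. -/
set_option maxHeartbeats 800000


/-- For every integer `n ≥ 2`,
`(n/(n−1) − 1/(2(n!−1)))^(n−1) − (1/2)(n/(n−1) + 1/(2(n!−1)))^(n−2) > 0`. -/
theorem statement8 (n : ℕ) (hn : 2 ≤ n) :
    0 < ((n : ℝ) / ((n : ℝ) - 1) - 1 / (2 * ((n.factorial : ℝ) - 1))) ^ (n - 1)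
        - (1 / 2) * ((n : ℝ) / ((n : ℝ) - 1) + 1 / (2 * ((n.factorial : ℝ) - 1))) ^ (n - 2) := by
  obtain ⟨k, rfl⟩ : ∃ k, n = k + 2 := ⟨n - 2, by omega⟩
  set n := k + 2 with hn2
  have hN2 : (2:ℝ) ≤ n := by exact_mod_cast hn
  have hNF : (n:ℝ) ≤ n.factorial := by exact Nat.cast_le.mpr (Nat.self_le_factorial n)
  set F : ℝ := (n.factorial : ℝ) with hF
  set N : ℝ := (n:ℝ) with hNdef
  have hden : (0:ℝ) < N - 1 := by linarith
  have hFden : (0:ℝ) < F - 1 := by linarith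
  have hF0 : (0:ℝ) < F := by linarith
  set ε : ℝ := 1/(2*(F-1)) with hεdef
  have hε0 : 0 < ε := by positivity
  have hr : N / (N-1) = 1 + 1/(N-1) := by field_simp; ring
  have hεlt : ε < 1/(N-1) := by
    rw [hεdef, div_lt_div_iff₀ (by positivity) hden]
    nlinarith
  have ha1 : 1 < N/(N-1) - ε := by rw [hr]; linarith
  set a : ℝ := N/(N-1) - ε with hadef
  set b : ℝ := N/(N-1) + ε with hbdef
  have ha0 : 0 < a := by linarith
  have hb0 : 0 < b := by rw [hbdef, hr]; positivity
  -- key natural number fact : 2*k ≤ (k+2)!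
  have hknat : 2*k ≤ n.factorial := by
    have h1 : (k+1) * ((k+1) * k.factorial) ≤ n.factorial := by
      rw [hn2, Nat.factorial_succ, Nat.factorial_succ]
      exact Nat.mul_le_mul (by omega) (Nat.mul_le_mul_left _ le_rfl)
    have h2 : 1 ≤ k.factorial := Nat.one_le_iff_ne_zero.mpr (Nat.factorial_ne_zero k)
    calc 2*k ≤ (k+1)*(k+1) := by nlinarith
    _ ≤ (k+1)*((k+1)*k.factorial) := by nlinarith [h2]
    _ ≤ n.factorial := h1
  have hkR : (k:ℝ)/F ≤ 1/2 := by
    rw [div_le_iff₀ hF0]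
    have : (2:ℝ)*k ≤ F := by rw [hF]; exact_mod_cast hknat
    linarith
  -- Bernoulli : (1 - 1/F)^k ≥ 1 - k/F ≥ 1/2
  have hbern : (1/2 : ℝ) ≤ (1 - 1/F)^k := by
    have h := one_add_mul_le_pow (a := -(1/F)) (by have : 1/F ≤ 1 := by { rw [div_le_one hF0]; linarith }; linarith) k
    have h1F : (1:ℝ)/F ≤ 1/2 := by rw [div_le_div_iff₀ hF0 (by norm_num)]; linarith
    calc (1/2 : ℝ) ≤ 1 - (k:ℝ)/F := by linarith
    _ = 1 + k * (-(1/F)) := by ring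
    _ ≤ (1 + -(1/F))^k := h
    _ = (1 - 1/F)^k := by rw [sub_eq_add_neg]
  -- hence F^k ≤ 2 (F-1)^k
  have hFk : F^k ≤ 2 * (F-1)^k := by
    have : (1 - 1/F) = (F-1)/F := by field_simp
    rw [this, div_pow, le_div_iff₀ (by positivity)] at hbern
    linarith
  -- b ≤ a * (F/(F-1))
  have hba : b ≤ a * (F/(F-1)) := by
    have h2ε : 2*ε = 1/(F-1) := by rw [hεdef]; field_simp
    have : a * (F/(F-1)) = a + a * (1/(F-1)) := by field_simp <;> ring
    rw [this]
    have : 1/(F-1) ≤ a * (1/(F-1)) := le_mul_of_one_le_left (by positivity) (le_of_lt ha1)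
    rw [hbdef, hadef]
    nlinarith
  -- b^k ≤ 2 a^k
  have hbk : b^k ≤ 2 * a^k := by
    calc b^k ≤ (a * (F/(F-1)))^k := pow_le_pow_left₀ hb0.le hba k
    _ = a^k * (F^k / (F-1)^k) := by rw [mul_pow, div_pow]
    _ ≤ a^k * 2 := by
        apply mul_le_mul_of_nonneg_left _ (pow_nonneg ha0.le k)
        rw [div_le_iff₀ (by positivity)]; linarith
    _ = 2 * a^k := by ring
  have hexp1 : n - 1 = k + 1 := by omega
  have hexp2 : n - 2 = k := by omega
  rw [hexp1, hexp2]
  have hak : 0 < a^k := pow_pos ha0 k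
  have : a^k < a^(k+1) := by
    rw [pow_succ]; nlinarith
  nlinarith
end
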